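/- Let f : [0,∞) → (0,∞) be nondecreasing, unbounded, and rapidly varying with index ∞ (i.e., lim_{x→∞} f(tx)/f(x) = ∞ for every t > 1). Define f⁻¹(y) = inf{x ≥ 0 : f(x) > y}. Then f⁻¹ is slowly varying; that is, for every t > 0, lim_{y→∞} f⁻¹(ty)/f⁻¹(y) = 1. -/

import Mathlib

open Filter

private lemma stmt4_aux (f : ℝ → ℝ) (hpos : ∀ x : ℝ, 0 ≤ x → 0 < f x)
    (hmono : MonotoneOn f (Set.Ici (0 : ℝ)))
    (hunb : ∀ M : ℝ, ∃ x : ℝ, 0 ≤ x ∧ M < f x)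
    (hrv : ∀ t : ℝ, 1 < t → Tendsto (fun x => f (t * x) / f x) atTop atTop)
    (finv : ℝ → ℝ) (hfinv : ∀ y, finv y = sInf {x : ℝ | 0 ≤ x ∧ y < f x})
    (t : ℝ) (ht : 1 ≤ t) :
    Tendsto (fun y => finv (t * y) / finv y) atTop (nhds 1) := by
  have hset : ∀ y : ℝ, {x : ℝ | 0 ≤ x ∧ y < f x}.Nonempty := by
    intro y; obtain ⟨x, hx, h⟩ := hunb y; exact ⟨x, hx, h⟩
  have hbdd : ∀ y : ℝ, BddBelow {x : ℝ | 0 ≤ x ∧ y < f x} := by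
    intro y; exact ⟨0, fun x hx => hx.1⟩
  have hmem : ∀ y x : ℝ, finv y < x → 0 ≤ x → y < f x := by
    intro y x hlt hx
    rw [hfinv] at hlt
    obtain ⟨m, hm, hmx⟩ := (csInf_lt_iff (hbdd y) (hset y)).1 hlt
    exact lt_of_lt_of_le hm.2 (hmono hm.1 hx hmx.le)
  rw [Metric.tendsto_atTop]
  intro ε hε
  set s : ℝ := 1 + ε / 2 with hs_def
  have hs : 1 < s := by simp [hs_def]; positivity
  have hs0 : 0 < s := lt_trans one_pos hs
  obtain ⟨X0, hX0⟩ := (eventually_atTop).1 ((hrv s hs).eventually_ge_atTop t)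
  set X : ℝ := max X0 1 with hX_def
  have hX0le : X0 ≤ X := le_max_left _ _
  have hX1 : (1 : ℝ) ≤ X := le_max_right _ _
  have hXnn : (0 : ℝ) ≤ X := le_trans zero_le_one hX1
  refine ⟨f X, fun y hy => ?_⟩
  have hy0 : 0 < y := lt_of_lt_of_le (hpos X hXnn) hy
  -- finv y ≥ X
  have h1 : X ≤ finv y := by
    rw [hfinv]
    apply le_csInf (hset y)
    intro x hx
    by_contra h
    push_neg at h
    exact absurd hx.2 (not_lt.2 (le_trans (hmono hx.1 hXnn h.le) hy))
  have hfy : 0 < finv y := lt_of_lt_of_le one_pos (le_trans hX1 h1)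
  -- upper bound : finv (t*y) ≤ s * finv y
  have hle : finv (t * y) ≤ s * finv y := by
    apply le_of_forall_pos_le_add
    intro δ hδ
    set x : ℝ := finv y + δ / s with hx_def
    have hxgt : finv y < x := by
      have : 0 < δ / s := by positivity
      simp [hx_def]; linarith
    have hx0 : 0 ≤ x := le_trans (le_trans hXnn h1) hxgt.le
    have hfx : y < f x := hmem y x hxgt hx0
    have hfxpos : 0 < f x := hpos x hx0
    have hratio : t ≤ f (s * x) / f x :=
      hX0 x (le_trans hX0le (le_trans h1 hxgt.le))
    have htfx : t * f x ≤ f (s * x) := (le_div_iff₀ hfxpos).1 hratio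
    have hty : t * y < f (s * x) := by nlinarith
    have hkey : finv (t * y) ≤ s * x := by
      rw [hfinv]
      exact csInf_le (hbdd _) ⟨by positivity, hty⟩
    have : s * x = s * finv y + δ := by
      rw [hx_def, mul_add, mul_div_assoc', mul_div_cancel_left₀ _ hs0.ne']
    linarith
  -- lower bound
  have hge : finv y ≤ finv (t * y) := by
    rw [hfinv, hfinv]
    apply csInf_le_csInf (hbdd _) (hset _)
    intro x hx
    exact ⟨hx.1, lt_of_le_of_lt (le_mul_of_one_le_left hy0.le ht) hx.2⟩
  have hub : finv (t * y) / finv y ≤ s := by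
    rw [div_le_iff₀ hfy]; linarith
  have hlb : 1 ≤ finv (t * y) / finv y := (one_le_div hfy).2 hge
  rw [Real.dist_eq, abs_of_nonneg (by linarith)]
  have : finv (t * y) / finv y - 1 ≤ ε / 2 := by
    have := hub; simp [hs_def] at this; linarith
  linarith

/-- If `f : [0,∞) → (0,∞)` is nondecreasing, unbounded and rapidly varying with index `∞`,
then its right-continuous generalized inverse `f⁻¹ y = inf {x ≥ 0 : f x > y}` is slowly
varying. -/
theorem stmt4 (f : ℝ → ℝ) (hpos : ∀ x : ℝ, 0 ≤ x → 0 < f x)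
    (hmono : MonotoneOn f (Set.Ici (0 : ℝ)))
    (hunb : ∀ M : ℝ, ∃ x : ℝ, 0 ≤ x ∧ M < f x)
    (hrv : ∀ t : ℝ, 1 < t → Tendsto (fun x => f (t * x) / f x) atTop atTop)
    (finv : ℝ → ℝ) (hfinv : ∀ y, finv y = sInf {x : ℝ | 0 ≤ x ∧ y < f x}) :
    ∀ t : ℝ, 0 < t → Tendsto (fun y => finv (t * y) / finv y) atTop (nhds 1) := by
  intro t ht
  rcases le_or_gt 1 t with h1 | h1
  · exact stmt4_aux f hpos hmono hunb hrv finv hfinv t h1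
  · have hu : 1 ≤ t⁻¹ := (one_le_inv₀ ht).2 h1.le
    have haux := stmt4_aux f hpos hmono hunb hrv finv hfinv t⁻¹ hu
    have hcomp : Tendsto (fun y => finv (t⁻¹ * (t * y)) / finv (t * y)) atTop (nhds 1) :=
      haux.comp (tendsto_id.const_mul_atTop ht)
    have hinv : Tendsto (fun y => (finv (t⁻¹ * (t * y)) / finv (t * y))⁻¹) atTop (nhds 1) := by
      simpa using hcomp.inv₀ one_ne_zero
    refine hinv.congr (fun y => ?_)
    rw [inv_div, inv_mul_cancel_left₀ (ne_of_gt ht)]
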